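/- Let d ≥ 1, let U ⊆ S^d_+ be open (in the subspace topology of ℝ^{d+1}), let θ : U → ℝ be continuous, and define i : U → AdS^{d+1} by i(x) = Φ(θ(x), x). Equip U with the Euclidean distance of ℝ^{d+1}. Then i is a spacelike immersion if and only if θ is locally contracting, i.e. every point of U has a neighbourhood on which θ is k-Lipschitz for some k ∈ (0, 1). -/

import Mathlib

noncomputable section

/-- The coefficient of the signature-(d,2) quadratic form: +1 on the first `d`
coordinates, −1 on the last two. -/
def eps (d : ℕ) (i : Fin (d + 2)) : ℝ := if (i : ℕ) < d then 1 else -1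

/-- The bilinear form ⟨·,·⟩ of signature (d,2) on ℝ^{d+2}. -/
def bil (d : ℕ) (x y : EuclideanSpace ℝ (Fin (d + 2))) : ℝ := ∑ i, eps d i * x i * y i

/-- The quadratic form q of signature (d,2). -/
def quad (d : ℕ) (x : EuclideanSpace ℝ (Fin (d + 2))) : ℝ := bil d x x
/-- The open upper hemisphere S^d_+ ⊂ ℝ^{d+1}. -/
def SdPlus (d : ℕ) : Set (EuclideanSpace ℝ (Fin (d + 1))) := {x | ‖x‖ = 1 ∧ 0 < x 0}

/-- The map Φ(θ, x) = (x₁/x₀, …, x_d/x₀, cos θ/x₀, sin θ/x₀). -/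
def Phi (d : ℕ) (θ : ℝ) (x : EuclideanSpace ℝ (Fin (d + 1))) :
    EuclideanSpace ℝ (Fin (d + 2)) :=
  WithLp.toLp 2 fun i => if h : (i : ℕ) < d then x ⟨(i : ℕ) + 1, by omega⟩ / x 0
    else if (i : ℕ) = d then Real.cos θ / x 0 else Real.sin θ / x 0
/-- A spacelike immersion from a metric space into AdS^{d+1} = {q = −1}:
a locally Lipschitz map such that, locally, ⟨i(p), i(p')⟩ ≤ −1 − c·d(p,p')². -/
def IsSpacelikeImmersion {H : Type*} [MetricSpace H] (d : ℕ)
    (i : H → EuclideanSpace ℝ (Fin (d + 2))) : Prop :=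
  LocallyLipschitz i ∧
  ∀ p : H, ∃ U ∈ nhds p, ∃ c : ℝ, 0 < c ∧
    ∀ p' ∈ U, ∀ p'' ∈ U, bil d (i p') (i p'') ≤ -1 - c * dist p' p'' ^ 2

lemma coord_abs_le {n : ℕ} (z : EuclideanSpace ℝ (Fin n)) (i : Fin n) : |z i| ≤ ‖z‖ := by
  rw [EuclideanSpace.norm_eq]
  have h1 : |z i| = Real.sqrt (‖z i‖ ^ 2) := by
    rw [Real.sqrt_sq_eq_abs]; simp
  rw [h1]
  apply Real.sqrt_le_sqrt
  exact Finset.single_le_sum (f := fun j => ‖z j‖ ^ 2) (fun j _ => sq_nonneg _) (Finset.mem_univ i)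

lemma cos_lip (a b : ℝ) : |Real.cos a - Real.cos b| ≤ |a - b| := by
  rw [Real.cos_sub_cos]
  have h1 := Real.abs_sin_le_abs (x := (a - b) / 2)
  have h2 := Real.abs_sin_le_one ((a + b) / 2)
  calc |(-2) * Real.sin ((a+b)/2) * Real.sin ((a-b)/2)|
      = 2 * |Real.sin ((a+b)/2)| * |Real.sin ((a-b)/2)| := by
        rw [abs_mul, abs_mul]; norm_num
    _ ≤ 2 * 1 * |(a-b)/2| := by
        apply mul_le_mul (by nlinarith [abs_nonneg (Real.sin ((a+b)/2))]) h1 (abs_nonneg _) (by norm_num)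
    _ = |a - b| := by rw [abs_div]; norm_num; ring

lemma sin_lip (a b : ℝ) : |Real.sin a - Real.sin b| ≤ |a - b| := by
  rw [Real.sin_sub_sin]
  have h1 := Real.abs_sin_le_abs (x := (a - b) / 2)
  have h2 := Real.abs_cos_le_one ((a + b) / 2)
  calc |2 * Real.sin ((a-b)/2) * Real.cos ((a+b)/2)|
      = 2 * |Real.sin ((a-b)/2)| * |Real.cos ((a+b)/2)| := by
        rw [abs_mul, abs_mul]; norm_num
    _ ≤ 2 * |(a-b)/2| * 1 := by
        apply mul_le_mul (by nlinarith [abs_nonneg (Real.sin ((a-b)/2))]) h2 (abs_nonneg _) (by positivity)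
    _ = |a - b| := by rw [abs_div]; norm_num; ring

lemma inner_eq_one_sub {n : ℕ} (x y : EuclideanSpace ℝ (Fin n)) (hx : ‖x‖ = 1) (hy : ‖y‖ = 1) :
    ∑ i, x i * y i = 1 - dist x y ^ 2 / 2 := by
  have h : ‖x - y‖ ^ 2 = ‖x‖ ^ 2 - 2 * (inner ℝ x y : ℝ) + ‖y‖ ^ 2 := norm_sub_sq_real x y
  have h2 : (inner ℝ x y : ℝ) = ∑ i, x i * y i := by
    rw [PiLp.inner_apply]; simp [RCLike.inner_apply, mul_comm]
  rw [dist_eq_norm, ← h2]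
  nlinarith [h]

lemma bil_phi (d : ℕ) (θ φ : ℝ) (x y : EuclideanSpace ℝ (Fin (d + 1)))
    (hx : ‖x‖ = 1) (hy : ‖y‖ = 1) (hx0 : 0 < x 0) (hy0 : 0 < y 0) :
    bil d (Phi d θ x) (Phi d φ y)
      = ((1 - Real.cos (θ - φ)) - dist x y ^ 2 / 2) / (x 0 * y 0) - 1 := by
  have hx0' : x 0 ≠ 0 := ne_of_gt hx0
  have hy0' : y 0 ≠ 0 := ne_of_gt hy0
  have hsum : ∑ i, x i * y i = 1 - dist x y ^ 2 / 2 := inner_eq_one_sub x y hx hy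
  rw [Fin.sum_univ_succ] at hsum
  unfold bil
  rw [Fin.sum_univ_castSucc, Fin.sum_univ_castSucc]
  have e1 : ∀ i : Fin d, eps d (i.castSucc.castSucc) * Phi d θ x (i.castSucc.castSucc) *
      Phi d φ y (i.castSucc.castSucc) = x i.succ * y i.succ / (x 0 * y 0) := by
    intro i
    have hi : ((i.castSucc.castSucc : Fin (d+2)) : ℕ) = (i : ℕ) := rfl
    have hlt : ((i.castSucc.castSucc : Fin (d+2)) : ℕ) < d := by rw [hi]; exact i.isLt
    simp only [eps, Phi, PiLp.toLp_apply, hlt, if_pos, dif_pos]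
    have : (⟨((i.castSucc.castSucc : Fin (d+2)) : ℕ) + 1, by omega⟩ : Fin (d+1)) = i.succ := by
      ext; simp [hi]
    rw [this]
    ring
  rw [Finset.sum_congr rfl (fun i _ => e1 i)]
  have hd1 : (((Fin.last d).castSucc : Fin (d+2)) : ℕ) = d := rfl
  have hd2 : ((Fin.last (d+1) : Fin (d+2)) : ℕ) = d + 1 := rfl
  have e2 : eps d ((Fin.last d).castSucc) * Phi d θ x ((Fin.last d).castSucc) *
      Phi d φ y ((Fin.last d).castSucc) = -(Real.cos θ * Real.cos φ) / (x 0 * y 0) := by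
    simp only [eps, Phi, PiLp.toLp_apply, hd1, lt_irrefl, if_neg, dif_neg, not_lt, le_refl, if_pos]
    norm_num; ring
  have e3 : eps d (Fin.last (d+1)) * Phi d θ x (Fin.last (d+1)) *
      Phi d φ y (Fin.last (d+1)) = -(Real.sin θ * Real.sin φ) / (x 0 * y 0) := by
    have h1 : ¬ ((Fin.last (d+1) : Fin (d+2)) : ℕ) < d := by omega
    have h2 : ¬ ((Fin.last (d+1) : Fin (d+2)) : ℕ) = d := by omega
    simp only [eps, Phi, PiLp.toLp_apply, h1, h2, if_neg, dif_neg]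
    norm_num; ring
  rw [e2, e3]
  rw [← Finset.sum_div, Real.cos_sub]
  have hS : ∑ i : Fin d, x i.succ * y i.succ = (1 - dist x y ^ 2 / 2) - x 0 * y 0 := by
    linarith [hsum]
  rw [hS]
  field_simp
  ring

lemma div_bound (a a' b b' m : ℝ) (ha' : |a'| ≤ 1) (hb'1 : b' ≤ 1) (hm : 0 < m)
    (hb : m ≤ b) (hb' : m ≤ b') :
    |a / b - a' / b'| ≤ (|a - a'| + |b - b'|) / m ^ 2 := by
  have hbp : 0 < b := lt_of_lt_of_le hm hb
  have hb'p : 0 < b' := lt_of_lt_of_le hm hb'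
  have key : a / b - a' / b' = ((a - a') * b' + a' * (b' - b)) / (b * b') := by
    rw [div_sub_div _ _ (ne_of_gt hbp) (ne_of_gt hb'p)]
    congr 1; ring
  rw [key, abs_div, abs_of_pos (mul_pos hbp hb'p)]
  apply div_le_div₀ (by positivity) _ (by positivity) (by nlinarith)
  calc |(a - a') * b' + a' * (b' - b)| ≤ |(a - a') * b'| + |a' * (b' - b)| := abs_add_le _ _
    _ = |a - a'| * |b'| + |a'| * |b - b'| := by rw [abs_mul, abs_mul, abs_sub_comm b' b]
    _ ≤ |a - a'| * 1 + 1 * |b - b'| := by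
        gcongr
        · rw [abs_of_pos hb'p]; exact hb'1
    _ = |a - a'| + |b - b'| := by ring

lemma phi_coord_bound (d : ℕ) (θ1 θ2 : ℝ) (x y : EuclideanSpace ℝ (Fin (d + 1))) (m : ℝ)
    (hm : 0 < m) (hx : ‖x‖ = 1) (hy : ‖y‖ = 1) (hx0 : m ≤ x 0) (hy0 : m ≤ y 0)
    (hθ : |θ1 - θ2| ≤ dist x y) (i : Fin (d + 2)) :
    |Phi d θ1 x i - Phi d θ2 y i| ≤ 2 / m ^ 2 * dist x y := by
  have hD : ∀ j, |x j - y j| ≤ dist x y := by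
    intro j
    have := coord_abs_le (x - y) j
    simpa [dist_eq_norm] using this
  have hyb : ∀ j, |y j| ≤ 1 := fun j => hy ▸ coord_abs_le y j
  have hy1 : y 0 ≤ 1 := (abs_le.1 (hyb 0)).2
  have hDnn : (0:ℝ) ≤ dist x y := dist_nonneg
  have main : ∀ a a' : ℝ, |a'| ≤ 1 → |a - a'| ≤ dist x y →
      |a / x 0 - a' / y 0| ≤ 2 / m ^ 2 * dist x y := by
    intro a a' ha' haa
    calc |a / x 0 - a' / y 0| ≤ (|a - a'| + |x 0 - y 0|) / m ^ 2 :=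
          div_bound a a' (x 0) (y 0) m ha' hy1 hm hx0 hy0
      _ ≤ (dist x y + dist x y) / m ^ 2 := by gcongr; exact hD 0
      _ = 2 / m ^ 2 * dist x y := by ring
  by_cases h1 : (i : ℕ) < d
  · simp only [Phi, PiLp.toLp_apply, dif_pos h1]
    exact main _ _ (hyb _) (hD _)
  · by_cases h2 : (i : ℕ) = d
    · simp only [Phi, PiLp.toLp_apply, dif_neg h1, if_pos h2]
      exact main _ _ (Real.abs_cos_le_one θ2) ((cos_lip θ1 θ2).trans hθ)
    · simp only [Phi, PiLp.toLp_apply, dif_neg h1, if_neg h2]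
      exact main _ _ (Real.abs_sin_le_one θ2) ((sin_lip θ1 θ2).trans hθ)

lemma phi_dist_bound (d : ℕ) (θ1 θ2 : ℝ) (x y : EuclideanSpace ℝ (Fin (d + 1))) (m : ℝ)
    (hm : 0 < m) (hx : ‖x‖ = 1) (hy : ‖y‖ = 1) (hx0 : m ≤ x 0) (hy0 : m ≤ y 0)
    (hθ : |θ1 - θ2| ≤ dist x y) :
    dist (Phi d θ1 x) (Phi d θ2 y) ≤ Real.sqrt (d + 2) * (2 / m ^ 2) * dist x y := by
  have hC : (0:ℝ) ≤ 2 / m ^ 2 * dist x y := by positivity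
  rw [EuclideanSpace.dist_eq]
  calc Real.sqrt (∑ i, dist (Phi d θ1 x i) (Phi d θ2 y i) ^ 2)
      ≤ Real.sqrt (∑ _i : Fin (d + 2), (2 / m ^ 2 * dist x y) ^ 2) := by
        apply Real.sqrt_le_sqrt
        apply Finset.sum_le_sum
        intro i _
        have := phi_coord_bound d θ1 θ2 x y m hm hx hy hx0 hy0 hθ i
        rw [Real.dist_eq]
        exact pow_le_pow_left₀ (abs_nonneg _) this 2
    _ = Real.sqrt ((d + 2 : ℝ) * (2 / m ^ 2 * dist x y) ^ 2) := by
        rw [Finset.sum_const, Finset.card_univ]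
        simp [nsmul_eq_mul]
    _ = Real.sqrt (d + 2) * (2 / m ^ 2) * dist x y := by
        rw [Real.sqrt_mul (by positivity), Real.sqrt_sq hC]
        ring


set_option maxHeartbeats 1000000 in
/-- for U ⊆ S^d_+ open (in the subspace topology of ℝ^{d+1}) with
the Euclidean distance, and θ : U → ℝ continuous, the graph map
i(x) = Φ(θ(x), x) is a spacelike immersion iff θ is locally contracting
(locally k-Lipschitz for some k ∈ (0,1)). -/
theorem graph_spacelike_iff_locally_contracting (d : ℕ) (hd : 1 ≤ d)
    (U : Set (EuclideanSpace ℝ (Fin (d + 1))))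
    (hUsub : U ⊆ SdPlus d)
    (hUopen : ∃ V : Set (EuclideanSpace ℝ (Fin (d + 1))), IsOpen V ∧ U = V ∩ SdPlus d)
    (θ : U → ℝ) (hθ : Continuous θ) :
    IsSpacelikeImmersion d (fun x : U => Phi d (θ x) (x : EuclideanSpace ℝ (Fin (d + 1)))) ↔
      ∀ p : U, ∃ W ∈ nhds p, ∃ k : ℝ, 0 < k ∧ k < 1 ∧
        ∀ q ∈ W, ∀ r ∈ W, |θ q - θ r| ≤ k * dist q r := by
  have hcont0 : Continuous fun x : U => ((x : EuclideanSpace ℝ (Fin (d+1))) 0) :=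
    ((EuclideanSpace.proj (0 : Fin (d+1))).continuous).comp continuous_subtype_val
  constructor
  · rintro ⟨hlipz, hsp⟩ p
    obtain ⟨V, hV, c, hc, hbil⟩ := hsp p
    obtain ⟨hp1, hp0⟩ := hUsub p.2
    set m : ℝ := (p : EuclideanSpace ℝ (Fin (d+1))) 0 / 2 with hmdef
    have hm0 : 0 < m := by positivity
    set b : ℝ := min (c * m ^ 2) (1/4) with hbdef
    have hb0 : 0 < b := lt_min (by positivity) (by norm_num)
    have hb14 : b ≤ 1/4 := min_le_right _ _
    have hbc : b ≤ c * m ^ 2 := min_le_left _ _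
    set δ : ℝ := min 1 (Real.sqrt b) with hddef
    have hδ0 : 0 < δ := lt_min one_pos (Real.sqrt_pos.2 hb0)
    have hδ1 : δ ≤ 1 := min_le_left _ _
    have hδ2b : δ ^ 2 ≤ b := by
      have h1 : δ ≤ Real.sqrt b := min_le_right _ _
      have h2 : Real.sqrt b ^ 2 = b := Real.sq_sqrt hb0.le
      nlinarith [hδ0]
    have h2b : (1:ℝ)/2 ≤ 1 - 2 * b := by linarith
    have h1b : (3:ℝ)/4 ≤ 1 - b := by linarith
    have hratpos : 0 < (1 - 2*b)/(1 - b) := div_pos (by linarith) (by linarith)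
    set k : ℝ := Real.sqrt ((1 - 2*b)/(1 - b)) with hkdef
    have hk0 : 0 < k := Real.sqrt_pos.2 hratpos
    have hk2 : k ^ 2 = (1 - 2*b)/(1 - b) := Real.sq_sqrt hratpos.le
    have hk2' : k ^ 2 * (1 - b) = 1 - 2 * b := by
      rw [hk2]; field_simp
    have hk1 : k < 1 := by
      have hlt : (1 - 2*b)/(1 - b) < 1 := by
        rw [div_lt_one (by linarith)]; linarith
      calc k = Real.sqrt ((1 - 2*b)/(1 - b)) := hkdef
        _ < Real.sqrt 1 := Real.sqrt_lt_sqrt hratpos.le (by linarith)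
        _ = 1 := Real.sqrt_one
    set S : Set U := V ∩ {x : U | m < (x : EuclideanSpace ℝ (Fin (d+1))) 0}
      ∩ {x : U | |θ x - θ p| < δ/2} with hSdef
    have hS : S ∈ nhds p := by
      apply Filter.inter_mem
      apply Filter.inter_mem hV
      · exact (isOpen_lt continuous_const hcont0).mem_nhds (by
          show m < (p : EuclideanSpace ℝ (Fin (d+1))) 0; rw [hmdef]; linarith)
      · exact (isOpen_lt ((hθ.sub continuous_const).abs) continuous_const).mem_nhds (by
          show |θ p - θ p| < δ/2; simp; linarith)
    refine ⟨S, hS, k, hk0, hk1, ?_⟩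
    intro q hq r hr
    obtain ⟨⟨hqV, hq0⟩, hqθ⟩ := hq
    obtain ⟨⟨hrV, hr0⟩, hrθ⟩ := hr
    obtain ⟨hq1, hq0'⟩ := hUsub q.2
    obtain ⟨hr1, hr0'⟩ := hUsub r.2
    set Δ : ℝ := θ q - θ r with hΔdef
    have hΔδ : |Δ| ≤ δ := by
      have h1 : Δ = (θ q - θ p) - (θ r - θ p) := by ring
      calc |Δ| ≤ |θ q - θ p| + |θ r - θ p| := by rw [h1]; exact abs_sub _ _
        _ ≤ δ := by
          have := hqθ; have := hrθ
          simp only [Set.mem_setOf_eq] at hqθ hrθ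
          linarith
    have hbil' := hbil q hqV r hrV
    rw [bil_phi d (θ q) (θ r) q r hq1 hr1 hq0' hr0', Subtype.dist_eq] at hbil'
    set D : ℝ := dist (q : EuclideanSpace ℝ (Fin (d+1))) (r : EuclideanSpace ℝ (Fin (d+1)))
      with hDdef
    have hDnn : 0 ≤ D := dist_nonneg
    set P : ℝ := (q : EuclideanSpace ℝ (Fin (d+1))) 0 * (r : EuclideanSpace ℝ (Fin (d+1))) 0
      with hPdef
    have hP : 0 < P := mul_pos hq0' hr0'
    have hPm : m ^ 2 ≤ P := by
      simp only [Set.mem_setOf_eq] at hq0 hr0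
      nlinarith
    have h1 : (1 - Real.cos Δ) - D ^ 2 / 2 ≤ -c * D ^ 2 * P := by
      have h2 : ((1 - Real.cos Δ) - D ^ 2 / 2) / P ≤ -c * D ^ 2 := by linarith
      calc (1 - Real.cos Δ) - D ^ 2 / 2 = ((1 - Real.cos Δ) - D ^ 2 / 2) / P * P :=
            (div_mul_cancel₀ _ (ne_of_gt hP)).symm
        _ ≤ -c * D ^ 2 * P := by
            apply mul_le_mul_of_nonneg_right h2 hP.le
    have hkey : 1 - Real.cos Δ ≤ (1/2 - b) * D ^ 2 := by
      have e1 : 0 ≤ c * D ^ 2 * (P - m ^ 2) :=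
        mul_nonneg (mul_nonneg hc.le (sq_nonneg D)) (by linarith)
      have e2 : 0 ≤ (c * m ^ 2 - b) * D ^ 2 := mul_nonneg (by linarith) (sq_nonneg D)
      linarith [h1, e1, e2]
    have hcb := Real.cos_bound (x := Δ) (hΔδ.trans hδ1)
    have hlow : Δ ^ 2 * ((1 - b)/2) ≤ 1 - Real.cos Δ := by
      have habs2 : |Δ| ^ 2 ≤ b := by
        nlinarith [abs_nonneg Δ, hΔδ, hδ2b]
      have h4 : |Δ| ^ 4 * (5/96) ≤ Δ ^ 2 * (b/2) := by
        have hh : |Δ| ^ 4 = Δ ^ 2 * |Δ| ^ 2 := by rw [← sq_abs]; ring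
        rw [hh]
        nlinarith [sq_nonneg Δ, habs2]
      have h5 := abs_le.1 hcb
      linarith [h5.2, h4]
    clear_value b δ k Δ D P
    have hfinal : Δ ^ 2 ≤ k ^ 2 * D ^ 2 := by
      rw [hk2, div_mul_eq_mul_div, le_div_iff₀ (by linarith : (0:ℝ) < 1 - b)]
      linarith [hkey, hlow]
    rw [Subtype.dist_eq, ← hDdef]
    calc |Δ| = Real.sqrt (Δ ^ 2) := by rw [Real.sqrt_sq_eq_abs]
      _ ≤ Real.sqrt (k ^ 2 * D ^ 2) := Real.sqrt_le_sqrt hfinal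
      _ = k * D := by
          rw [show k ^ 2 * D ^ 2 = (k * D) ^ 2 by ring, Real.sqrt_sq (by positivity)]
  · intro h
    constructor
    · intro p
      obtain ⟨W, hW, k, hk0, hk1, hlip⟩ := h p
      obtain ⟨hp1, hp0⟩ := hUsub p.2
      set m : ℝ := (p : EuclideanSpace ℝ (Fin (d+1))) 0 / 2 with hmdef
      have hm0 : 0 < m := by positivity
      set s : Set U := W ∩ {x : U | m < (x : EuclideanSpace ℝ (Fin (d+1))) 0} with hsdef
      have hs : s ∈ nhds p := Filter.inter_mem hW
        ((isOpen_lt continuous_const hcont0).mem_nhds (by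
          show m < (p : EuclideanSpace ℝ (Fin (d+1))) 0; rw [hmdef]; linarith))
      refine ⟨(Real.sqrt (d+2) * (2 / m ^ 2)).toNNReal, s, hs, ?_⟩
      apply LipschitzOnWith.of_dist_le_mul
      intro q hq r hr
      obtain ⟨hqW, hq0⟩ := hq
      obtain ⟨hrW, hr0⟩ := hr
      simp only [Set.mem_setOf_eq] at hq0 hr0
      have hθqr : |θ q - θ r| ≤
          dist (q : EuclideanSpace ℝ (Fin (d+1))) (r : EuclideanSpace ℝ (Fin (d+1))) := by
        have h1 := hlip q hqW r hrW
        rw [Subtype.dist_eq] at h1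
        refine h1.trans ?_
        nlinarith [dist_nonneg (x := (q : EuclideanSpace ℝ (Fin (d+1))))
          (y := (r : EuclideanSpace ℝ (Fin (d+1))))]
      have hb := phi_dist_bound d (θ q) (θ r) q r m hm0 (hUsub q.2).1 (hUsub r.2).1
        hq0.le hr0.le hθqr
      rw [Real.coe_toNNReal _ (by positivity), Subtype.dist_eq]
      exact hb
    · intro p
      obtain ⟨W, hW, k, hk0, hk1, hlip⟩ := h p
      refine ⟨W, hW, (1 - k ^ 2)/2, by nlinarith, ?_⟩
      intro q hq r hr
      obtain ⟨hq1, hq0⟩ := hUsub q.2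
      obtain ⟨hr1, hr0⟩ := hUsub r.2
      rw [bil_phi d (θ q) (θ r) q r hq1 hr1 hq0 hr0, Subtype.dist_eq]
      set D : ℝ := dist (q : EuclideanSpace ℝ (Fin (d+1))) (r : EuclideanSpace ℝ (Fin (d+1)))
        with hDdef
      have hDnn : 0 ≤ D := dist_nonneg
      have hΔ : |θ q - θ r| ≤ k * D := by
        have h1 := hlip q hq r hr
        rwa [Subtype.dist_eq] at h1
      have hcos : 1 - Real.cos (θ q - θ r) ≤ (θ q - θ r) ^ 2 / 2 := by
        linarith [Real.one_sub_sq_div_two_le_cos (x := θ q - θ r)]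
      have hΔ2 : (θ q - θ r) ^ 2 ≤ k ^ 2 * D ^ 2 := by
        have h2 := mul_self_le_mul_self (abs_nonneg (θ q - θ r)) hΔ
        rw [abs_mul_abs_self] at h2
        nlinarith [h2]
      set P : ℝ := (q : EuclideanSpace ℝ (Fin (d+1))) 0 * (r : EuclideanSpace ℝ (Fin (d+1))) 0
        with hPdef
      have hP : 0 < P := mul_pos hq0 hr0
      have hq01 : (q : EuclideanSpace ℝ (Fin (d+1))) 0 ≤ 1 :=
        (abs_le.1 (hq1 ▸ coord_abs_le (q : EuclideanSpace ℝ (Fin (d+1))) 0)).2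
      have hr01 : (r : EuclideanSpace ℝ (Fin (d+1))) 0 ≤ 1 :=
        (abs_le.1 (hr1 ▸ coord_abs_le (r : EuclideanSpace ℝ (Fin (d+1))) 0)).2
      have hP1 : P ≤ 1 := by nlinarith
      have hmain : ((1 - Real.cos (θ q - θ r)) - D ^ 2 / 2) / P ≤ -((1 - k ^ 2)/2) * D ^ 2 := by
        rw [div_le_iff₀ hP]
        have hterm : 0 ≤ (1 - k ^ 2)/2 * D ^ 2 * (1 - P) :=
          mul_nonneg (mul_nonneg (by nlinarith) (sq_nonneg D)) (by linarith)
        linarith [hcos, hΔ2, hterm]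
      linarith [hmain]
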